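/- Let κ, ρ, σ be density matrices on M_n(ℂ) with κ ⊑ ρ and ρ ⊑ σ in the QPE order. Then for every t ∈ [0,1], (1−t)•ρ + t•κ ⊑ (1−t)•σ + t•κ. In particular (taking κ = ⊥ₙ), the depolarizing map D_t(ρ) = (1−t)•ρ + t•⊥ₙ is monotone for the QPE order. -/

import Mathlib

open Matrix
open scoped ComplexOrder

/-- The largest eigenvalue of a matrix (for a positive semidefinite matrix this
equals the operator norm). -/
noncomputable def maxEig {m : Type*} [Fintype m] (A : Matrix m m ℂ) : ℝ :=
  sSup {a : ℝ | ∃ v : m → ℂ, v ≠ 0 ∧ A.mulVec v = (a : ℂ) • v}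

/-- A density matrix: positive semidefinite with trace 1. -/
def IsDensity {m : Type*} [Fintype m] (ρ : Matrix m m ℂ) : Prop :=
  ρ.PosSemidef ∧ ρ.trace = 1

/-- The quantum positive evidence (QPE) order: ρ ⊑ σ iff σ⁺•ρ - ρ⁺•σ ≥ 0. -/
def QPE {m : Type*} [Fintype m] (ρ σ : Matrix m m ℂ) : Prop :=
  (maxEig σ • ρ - maxEig ρ • σ).PosSemidef

section aux
set_option linter.unusedSectionVars false
variable {m : Type*} [Fintype m] [DecidableEq m]

lemma smul_eq_coe_smul (c : ℝ) (M : Matrix m m ℂ) : c • M = (c : ℂ) • M := by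
  ext i j; simp [Matrix.smul_apply, Complex.real_smul]

lemma psd_csmul {M : Matrix m m ℂ} (hM : M.PosSemidef) {c : ℝ} (hc : 0 ≤ c) :
    ((c : ℂ) • M).PosSemidef := by
  refine Matrix.PosSemidef.of_dotProduct_mulVec_nonneg ?_ ?_
  · have : ((c:ℂ) • M)ᴴ = star (c:ℂ) • Mᴴ := Matrix.conjTranspose_smul _ _
    rw [Matrix.IsHermitian, this, hM.1]
    simp [Complex.conj_ofReal]
  · intro x
    rw [smul_mulVec, dotProduct_smul, smul_eq_mul]
    exact mul_nonneg (by exact_mod_cast Complex.zero_le_real.mpr hc) (hM.dotProduct_mulVec_nonneg x)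

lemma psd_rsmul {M : Matrix m m ℂ} (hM : M.PosSemidef) {c : ℝ} (hc : 0 ≤ c) :
    (c • M).PosSemidef := by
  rw [smul_eq_coe_smul]; exact psd_csmul hM hc

lemma rayleigh_le {A : Matrix m m ℂ} {c a : ℝ} {v : m → ℂ}
    (hpsd : ((c : ℂ) • 1 - A).PosSemidef) (hv : v ≠ 0)
    (heig : A *ᵥ v = (a : ℂ) • v) : a ≤ c := by
  have h := hpsd.dotProduct_mulVec_nonneg v
  rw [sub_mulVec, smul_mulVec, one_mulVec, heig, dotProduct_sub,
    dotProduct_smul, dotProduct_smul] at h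
  have hd : 0 < star v ⬝ᵥ v := Matrix.dotProduct_star_self_pos_iff.mpr hv
  rw [Complex.lt_def] at hd
  rw [Complex.le_def] at h
  have key : 0 ≤ (c - a) * (star v ⬝ᵥ v).re := by
    have := h.1
    simp only [Complex.sub_re, smul_eq_mul, Complex.mul_re, Complex.ofReal_re,
      Complex.ofReal_im, Complex.zero_re, zero_mul, sub_zero] at this ⊢
    nlinarith [this]
  have hp : 0 < (star v ⬝ᵥ v).re := by simpa using hd.1
  nlinarith [key, hp]

lemma maxEig_unique {A : Matrix m m ℂ} {c : ℝ} {v : m → ℂ} (hv : v ≠ 0)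
    (heig : A *ᵥ v = (c : ℂ) • v) (hpsd : ((c : ℂ) • 1 - A).PosSemidef) :
    maxEig A = c := by
  have hmem : c ∈ {a : ℝ | ∃ v : m → ℂ, v ≠ 0 ∧ A.mulVec v = (a : ℂ) • v} := ⟨v, hv, heig⟩
  have hub : ∀ a ∈ {a : ℝ | ∃ v : m → ℂ, v ≠ 0 ∧ A.mulVec v = (a : ℂ) • v}, a ≤ c := by
    rintro a ⟨w, hw, hew⟩
    exact rayleigh_le hpsd hw hew
  exact le_antisymm (csSup_le ⟨c, hmem⟩ hub) (le_csSup ⟨c, hub⟩ hmem)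

variable [Nonempty m]

lemma smul_one_sub_diag_psd {f : m → ℝ} {c : ℝ} (hf : ∀ i, f i ≤ c) :
    ((c : ℂ) • 1 - diagonal (RCLike.ofReal ∘ f) : Matrix m m ℂ).PosSemidef := by
  have : ((c : ℂ) • 1 - diagonal (RCLike.ofReal ∘ f) : Matrix m m ℂ)
      = diagonal (fun i => ((c - f i : ℝ) : ℂ)) := by
    ext i j
    rcases eq_or_ne i j with h | h <;>
      simp [h, Matrix.diagonal_apply, Matrix.one_apply, Matrix.smul_apply]
  rw [this]
  exact Matrix.PosSemidef.diagonal fun i => Complex.zero_le_real.mpr (by linarith [hf i])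

lemma smul_one_sub_spectral {A : Matrix m m ℂ} (hA : A.IsHermitian) {c : ℝ}
    (hf : ∀ i, hA.eigenvalues i ≤ c) : ((c : ℂ) • 1 - A).PosSemidef := by
  have hU := (Matrix.mem_unitaryGroup_iff).mp (hA.eigenvectorUnitary).2
  have key : ((c : ℂ) • 1 - A) =
      (hA.eigenvectorUnitary : Matrix m m ℂ) *
        ((c : ℂ) • 1 - diagonal (RCLike.ofReal ∘ hA.eigenvalues)) *
        (hA.eigenvectorUnitary : Matrix m m ℂ)ᴴ := by
    conv_lhs => rw [hA.spectral_theorem, Unitary.conjStarAlgAut_apply]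
    rw [Matrix.mul_sub, Matrix.sub_mul, ← Matrix.star_eq_conjTranspose]
    congr 1
    rw [Matrix.mul_smul, Matrix.mul_one, Matrix.smul_mul, hU]
  rw [key]
  exact (smul_one_sub_diag_psd hf).mul_mul_conjTranspose_same _

lemma eigenvec_complex {A : Matrix m m ℂ} (hA : A.IsHermitian) (i : m) :
    ∃ v : m → ℂ, v ≠ 0 ∧ A *ᵥ v = ((hA.eigenvalues i : ℝ) : ℂ) • v := by
  refine ⟨⇑(hA.eigenvectorBasis i), ?_, ?_⟩
  · intro h
    exact hA.eigenvectorBasis.orthonormal.ne_zero i (by ext j; exact congrFun h j)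
  · rw [hA.mulVec_eigenvectorBasis]
    funext j
    simp [Complex.real_smul]

lemma trace_eq_sum_eigs {A : Matrix m m ℂ} (hA : A.IsHermitian) :
    A.trace = ∑ i, ((hA.eigenvalues i : ℝ) : ℂ) := by
  conv_lhs => rw [hA.spectral_theorem, Unitary.conjStarAlgAut_apply]
  rw [Matrix.trace_mul_cycle,
    (Matrix.mem_unitaryGroup_iff').mp (hA.eigenvectorUnitary).2, Matrix.one_mul,
    Matrix.trace_diagonal]
  rfl

lemma maxEig_eq_sup {A : Matrix m m ℂ} (hA : A.IsHermitian) :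
    maxEig A = Finset.univ.sup' Finset.univ_nonempty hA.eigenvalues := by
  obtain ⟨i0, -, hi0⟩ := Finset.exists_mem_eq_sup' Finset.univ_nonempty hA.eigenvalues
  obtain ⟨v, hv, hev⟩ := eigenvec_complex hA i0
  refine maxEig_unique hv ?_ ?_
  · rw [hev, hi0]
  · exact smul_one_sub_spectral hA fun i => Finset.le_sup' _ (Finset.mem_univ i)

lemma maxEig_smul_one_sub_psd {A : Matrix m m ℂ} (hA : A.IsHermitian) :
    ((maxEig A : ℂ) • 1 - A).PosSemidef := by
  rw [maxEig_eq_sup hA]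
  exact smul_one_sub_spectral hA fun i => Finset.le_sup' _ (Finset.mem_univ i)

lemma maxEig_exists_vec {A : Matrix m m ℂ} (hA : A.IsHermitian) :
    ∃ v : m → ℂ, v ≠ 0 ∧ A *ᵥ v = ((maxEig A : ℝ) : ℂ) • v := by
  obtain ⟨i0, -, hi0⟩ := Finset.exists_mem_eq_sup' Finset.univ_nonempty hA.eigenvalues
  obtain ⟨v, hv, hev⟩ := eigenvec_complex hA i0
  exact ⟨v, hv, by rw [hev, ← hi0, ← maxEig_eq_sup hA]⟩

lemma maxEig_pos_of_density {ρ : Matrix m m ℂ} (hρ : IsDensity ρ) : 0 < maxEig ρ := by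
  have htr : ∑ i, ((hρ.1.isHermitian.eigenvalues i : ℝ) : ℂ) = 1 :=
    (trace_eq_sum_eigs hρ.1.isHermitian).symm.trans hρ.2
  have hsum : ∑ i, hρ.1.isHermitian.eigenvalues i = 1 := by
    have := htr
    push_cast at this
    exact_mod_cast this
  have hub : ∀ i, hρ.1.isHermitian.eigenvalues i ≤ maxEig ρ := by
    rw [maxEig_eq_sup hρ.1.isHermitian]
    exact fun i => Finset.le_sup' _ (Finset.mem_univ i)
  by_contra hle
  push_neg at hle
  have : (1 : ℝ) ≤ 0 := by
    rw [← hsum]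
    exact Finset.sum_nonpos fun i _ => le_trans (hub i) hle
  linarith

lemma psd_trace_nonneg {M : Matrix m m ℂ} (hM : M.PosSemidef) : 0 ≤ M.trace := by
  refine Finset.sum_nonneg fun i _ => ?_
  have h := hM.dotProduct_mulVec_nonneg (Pi.single i 1)
  simpa [dotProduct, Pi.single_apply, Matrix.mulVec, Finset.sum_ite_eq,
    Matrix.diag] using h
end aux


section main
set_option linter.unusedSectionVars false
variable {m : Type*} [Fintype m] [DecidableEq m] [Nonempty m]

lemma shared_vec {κ ρ : Matrix m m ℂ} (hpos : 0 < maxEig ρ) (h1 : QPE κ ρ)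
    (hκpsd : ((maxEig κ : ℂ) • 1 - κ).PosSemidef)
    {v : m → ℂ} (hv : v ≠ 0) (hev : ρ *ᵥ v = (maxEig ρ : ℂ) • v) :
    κ *ᵥ v = (maxEig κ : ℂ) • v := by
  have hM : (maxEig ρ • κ - maxEig κ • ρ).PosSemidef := h1
  have hN : (((maxEig ρ : ℝ) : ℂ) • ((maxEig κ : ℂ) • 1 - κ)).PosSemidef :=
    psd_csmul hκpsd hpos.le
  have heq : maxEig ρ • κ - maxEig κ • ρ + ((maxEig ρ : ℝ) : ℂ) • ((maxEig κ : ℂ) • 1 - κ)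
      = ((maxEig κ : ℝ) : ℂ) • (((maxEig ρ : ℝ) : ℂ) • 1 - ρ) := by
    rw [smul_eq_coe_smul, smul_eq_coe_smul]
    module
  have hMN : (maxEig ρ • κ - maxEig κ • ρ
      + ((maxEig ρ : ℝ) : ℂ) • ((maxEig κ : ℂ) • 1 - κ)) *ᵥ v = 0 := by
    rw [heq, smul_mulVec, sub_mulVec, smul_mulVec, one_mulVec, hev,
      sub_self, smul_zero]
  have h0 : star v ⬝ᵥ (maxEig ρ • κ - maxEig κ • ρ) *ᵥ v
      + star v ⬝ᵥ (((maxEig ρ : ℝ) : ℂ) • ((maxEig κ : ℂ) • 1 - κ)) *ᵥ v = 0 := by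
    rw [← dotProduct_add, ← add_mulVec, hMN, dotProduct_zero]
  have hy : star v ⬝ᵥ (((maxEig ρ : ℝ) : ℂ) • ((maxEig κ : ℂ) • 1 - κ)) *ᵥ v = 0 := by
    refine le_antisymm ?_ (hN.dotProduct_mulVec_nonneg v)
    have := eq_neg_of_add_eq_zero_right h0
    rw [this]
    exact neg_nonpos.mpr (hM.dotProduct_mulVec_nonneg v)
  have hzero := (hN.dotProduct_mulVec_zero_iff v).mp hy
  rw [smul_mulVec, sub_mulVec, smul_mulVec, one_mulVec] at hzero
  have ha : ((maxEig ρ : ℝ) : ℂ) ≠ 0 := by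
    exact_mod_cast hpos.ne'
  rcases smul_eq_zero.mp hzero with h | h
  · exact absurd h ha
  · rw [sub_eq_zero] at h
    exact h.symm

theorem qpe_main {κ ρ σ : Matrix m m ℂ}
    (hκ : IsDensity κ) (hρ : IsDensity ρ) (hσ : IsDensity σ)
    (h1 : QPE κ ρ) (h2 : QPE ρ σ) {t : ℝ} (ht0 : 0 ≤ t) (ht1 : t ≤ 1) :
    QPE ((1 - t) • ρ + t • κ) ((1 - t) • σ + t • κ) := by
  have ha : 0 < maxEig ρ := maxEig_pos_of_density hρ
  have hb : 0 < maxEig σ := maxEig_pos_of_density hσ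
  have hc : 0 < maxEig κ := maxEig_pos_of_density hκ
  set a := maxEig ρ with ha'
  set b := maxEig σ with hb'
  set c := maxEig κ with hc'
  -- a ≤ b
  have hab : a ≤ b := by
    have htr : (0 : ℂ) ≤ (b • ρ - a • σ).trace := psd_trace_nonneg h2
    rw [trace_sub, trace_smul, trace_smul, hρ.2, hσ.2] at htr
    have : (0 : ℂ) ≤ ((b - a : ℝ) : ℂ) := by
      convert htr using 1
      push_cast [Complex.real_smul]
      ring
    have := Complex.zero_le_real.mp this
    linarith
  -- transitivity: QPE κ σ
  have h3 : QPE κ σ := by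
    have hsum : (a : ℝ) • (b • κ - c • σ) = b • (a • κ - c • ρ) + c • (b • ρ - a • σ) := by
      module
    have hpsd : ((a : ℝ) • (b • κ - c • σ)).PosSemidef := by
      rw [hsum]
      exact (psd_rsmul h1 hb.le).add (psd_rsmul h2 hc.le)
    have hinv : (b • κ - c • σ) = a⁻¹ • ((a : ℝ) • (b • κ - c • σ)) := by
      rw [smul_smul, inv_mul_cancel₀ ha.ne', one_smul]
    show (b • κ - c • σ).PosSemidef
    rw [hinv]
    exact psd_rsmul hpsd (by positivity)
  -- top eigenvectors
  obtain ⟨v, hv, hev⟩ := maxEig_exists_vec hρ.1.isHermitian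
  obtain ⟨w, hw, hew⟩ := maxEig_exists_vec hσ.1.isHermitian
  have hκpsd := maxEig_smul_one_sub_psd hκ.1.isHermitian
  have hρpsd := maxEig_smul_one_sub_psd hρ.1.isHermitian
  have hσpsd := maxEig_smul_one_sub_psd hσ.1.isHermitian
  have hevκ : κ *ᵥ v = (c : ℂ) • v := shared_vec ha h1 hκpsd hv hev
  have hewκ : κ *ᵥ w = (c : ℂ) • w := shared_vec hb h3 hκpsd hw hew
  -- maxEig of the mixtures
  have hmixρ : maxEig ((1 - t) • ρ + t • κ) = (1 - t) * a + t * c := by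
    refine maxEig_unique hv ?_ ?_
    · rw [add_mulVec, smul_eq_coe_smul (1 - t), smul_eq_coe_smul t, smul_mulVec,
        smul_mulVec, hev, hevκ, smul_smul, smul_smul, ← add_smul]
      congr 1
      push_cast
      ring
    · have hId : (((1 - t) * a + t * c : ℝ) : ℂ) • (1 : Matrix m m ℂ)
          - ((1 - t) • ρ + t • κ)
          = (1 - t) • ((a : ℂ) • 1 - ρ) + t • ((c : ℂ) • 1 - κ) := by
        rw [smul_eq_coe_smul (1 - t) ρ, smul_eq_coe_smul t κ,
          smul_eq_coe_smul (1 - t), smul_eq_coe_smul t]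
        match_scalars <;> (push_cast; ring)
      rw [hId]
      exact (psd_rsmul hρpsd (by linarith)).add (psd_rsmul hκpsd ht0)
  have hmixσ : maxEig ((1 - t) • σ + t • κ) = (1 - t) * b + t * c := by
    refine maxEig_unique hw ?_ ?_
    · rw [add_mulVec, smul_eq_coe_smul (1 - t), smul_eq_coe_smul t, smul_mulVec,
        smul_mulVec, hew, hewκ, smul_smul, smul_smul, ← add_smul]
      congr 1
      push_cast
      ring
    · have hId : (((1 - t) * b + t * c : ℝ) : ℂ) • (1 : Matrix m m ℂ)
          - ((1 - t) • σ + t • κ)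
          = (1 - t) • ((b : ℂ) • 1 - σ) + t • ((c : ℂ) • 1 - κ) := by
        rw [smul_eq_coe_smul (1 - t) σ, smul_eq_coe_smul t κ,
          smul_eq_coe_smul (1 - t), smul_eq_coe_smul t]
        match_scalars <;> (push_cast; ring)
      rw [hId]
      exact (psd_rsmul hσpsd (by linarith)).add (psd_rsmul hκpsd ht0)
  -- the final identity
  show (maxEig ((1 - t) • σ + t • κ) • ((1 - t) • ρ + t • κ)
      - maxEig ((1 - t) • ρ + t • κ) • ((1 - t) • σ + t • κ)).PosSemidef
  rw [hmixρ, hmixσ]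
  have hane : a ≠ 0 := ha.ne'
  have hkey : ((1 - t) * b + t * c) • ((1 - t) • ρ + t • κ)
      - ((1 - t) * a + t * c) • ((1 - t) • σ + t • κ)
      = ((1 - t) ^ 2 + t * (1 - t) * c / a) • (b • ρ - a • σ)
        + (t * (1 - t) * (b - a) / a) • (a • κ - c • ρ) := by
    match_scalars <;> field_simp [hane] <;> ring
  rw [hkey]
  have h1t : 0 ≤ 1 - t := by linarith
  have hx : 0 ≤ (1 - t) ^ 2 + t * (1 - t) * c / a :=
    add_nonneg (sq_nonneg _) (div_nonneg (mul_nonneg (mul_nonneg ht0 h1t) hc.le) ha.le)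
  have hy : 0 ≤ t * (1 - t) * (b - a) / a :=
    div_nonneg (mul_nonneg (mul_nonneg ht0 h1t) (by linarith)) ha.le
  exact (psd_rsmul h2 hx).add (psd_rsmul h1 hy)
end main

theorem stmt15 {n : ℕ} (κ ρ σ : Matrix (Fin n) (Fin n) ℂ)
    (hκ : IsDensity κ) (hρ : IsDensity ρ) (hσ : IsDensity σ)
    (h1 : QPE κ ρ) (h2 : QPE ρ σ) (t : ℝ) (ht : t ∈ Set.Icc (0 : ℝ) 1) :
    QPE ((1 - t) • ρ + t • κ) ((1 - t) • σ + t • κ) ∧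
    QPE ((1 - t) • ρ + t • ((n : ℝ)⁻¹ • (1 : Matrix (Fin n) (Fin n) ℂ)))
        ((1 - t) • σ + t • ((n : ℝ)⁻¹ • (1 : Matrix (Fin n) (Fin n) ℂ))) := by
  have hn : n ≠ 0 := by
    rintro rfl
    exact absurd hρ.2 (by simp [Matrix.trace])
  haveI : Nonempty (Fin n) := ⟨⟨0, Nat.pos_of_ne_zero hn⟩⟩
  obtain ⟨ht0, ht1⟩ := ht
  have hninv : (0:ℝ) < (n : ℝ)⁻¹ := by
    have : (0:ℝ) < (n:ℝ) := by exact_mod_cast Nat.pos_of_ne_zero hn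
    positivity
  set κ0 : Matrix (Fin n) (Fin n) ℂ := (n : ℝ)⁻¹ • 1 with hκ0def
  have hκ0psd : κ0.PosSemidef := psd_rsmul Matrix.PosSemidef.one hninv.le
  have hκ0tr : κ0.trace = 1 := by
    rw [hκ0def, trace_smul, Matrix.trace_one, Fintype.card_fin]
    rw [Complex.real_smul]
    have hnC : ((n:ℝ) : ℂ) ≠ 0 := by
      exact_mod_cast (Nat.cast_ne_zero (R := ℝ)).mpr hn
    push_cast
    field_simp
  have hκ0 : IsDensity κ0 := ⟨hκ0psd, hκ0tr⟩
  have hone : (fun _ : Fin n => (1:ℂ)) ≠ 0 := by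
    intro h
    simpa using congrFun h ⟨0, Nat.pos_of_ne_zero hn⟩
  have hκ0max : maxEig κ0 = (n : ℝ)⁻¹ := by
    refine maxEig_unique (v := fun _ => 1) hone ?_ ?_
    · rw [hκ0def, smul_eq_coe_smul, smul_mulVec, one_mulVec]
    · rw [hκ0def, smul_eq_coe_smul, sub_self]
      exact Matrix.PosSemidef.zero
  have hq0 : QPE κ0 ρ := by
    show (maxEig ρ • κ0 - maxEig κ0 • ρ).PosSemidef
    rw [hκ0max, hκ0def]
    have hid : maxEig ρ • ((n : ℝ)⁻¹ • (1:Matrix (Fin n) (Fin n) ℂ)) - (n:ℝ)⁻¹ • ρ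
        = (n:ℝ)⁻¹ • (maxEig ρ • (1:Matrix (Fin n) (Fin n) ℂ) - ρ) := by
      module
    rw [hid]
    refine psd_rsmul ?_ hninv.le
    rw [smul_eq_coe_smul]
    exact maxEig_smul_one_sub_psd hρ.1.isHermitian
  exact ⟨qpe_main hκ hρ hσ h1 h2 ht0 ht1, qpe_main hκ0 hρ hσ hq0 h2 ht0 ht1⟩
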